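/- Let (Ω, P) be a probability space, let U be a finite index set, let c : U → ℕ be an assignment of indices to classes, and let (I_u)_{u ∈ U} be random variables each taking values in {0,1}, such that the σ-algebras generated by the families {I_u : c(u) = i}, for distinct values of i, are mutually independent. Then the variance of I = Σ_{u ∈ U} I_u satisfies Var(I) ≤ Σ_{u ∈ U} m(u)·E[I_u], where m(u) = |{u' ∈ U : c(u') = c(u)}| is the size of the class of u. -/

import Mathlib

open Finset Real MeasureTheory ProbabilityTheory

namespace LTCPaper

/-- A hyperedge over coordinates `Fin n`: a finite set `h` of coordinates together with a
constraint `f_h : (h → Bool) → Bool` on assignments to those coordinates. -/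
abbrev Edge (n : ℕ) := Σ h : Finset (Fin n), ({v // v ∈ h} → Bool) → Bool

/-- `x` satisfies the hyperedge `e` if the constraint accepts the restriction of `x` to it. -/
def sat {n : ℕ} (x : Fin n → Bool) (e : Edge n) : Prop :=
  e.2 (fun v => x v.1) = true

instance {n : ℕ} (x : Fin n → Bool) (e : Edge n) : Decidable (sat x e) :=
  inferInstanceAs (Decidable (_ = true))

/-- Relative Hamming distance: fraction of coordinates on which `x` and `y` differ. -/
noncomputable def relDist {n : ℕ} (x y : Fin n → Bool) : ℝ :=
  (hammingDist x y : ℝ) / n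

/-- `x` has relative distance at least `τ` from the code `C`. -/
def farFrom {n : ℕ} (C : Set (Fin n → Bool)) (x : Fin n → Bool) (τ : ℝ) : Prop :=
  ∀ y ∈ C, τ ≤ relDist x y

/-- `C` has relative distance at least `δ`. -/
def hasDistance {n : ℕ} (C : Set (Fin n → Bool)) (δ : ℝ) : Prop :=
  ∀ x ∈ C, ∀ y ∈ C, x ≠ y → δ ≤ relDist x y

/-- `E` is a `(τ,ε)`-test-hypergraph for `C`: all codewords satisfy all hyperedges, and every
word at relative distance at least `τ` from `C` falsifies at least an `ε` fraction of them. -/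
def IsTestHypergraph {n : ℕ} (C : Set (Fin n → Bool)) (E : Finset (Edge n)) (τ ε : ℝ) : Prop :=
  (∀ x ∈ C, ∀ e ∈ E, sat x e) ∧
  (∀ x : Fin n → Bool, farFrom C x τ →
    ε * E.card ≤ ((E.filter fun e => ¬ sat x e).card : ℝ))

/-- A constraint is LOF ("last-one-fixed") if any two accepted assignments agreeing on all but
one coordinate agree on that coordinate as well. -/
def LOF {n : ℕ} (e : Edge n) : Prop :=
  ∀ a b : {v // v ∈ e.1} → Bool, e.2 a = true → e.2 b = true →
    ∀ u : {v // v ∈ e.1}, (∀ v : {v // v ∈ e.1}, v ≠ u → a v = b v) → a u = b u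


/-- **Lemma (variance bound for class-wise independent indicators).** If the indicator variables
`I_u` are grouped into classes by `c` and the σ-algebras generated by distinct classes are
mutually independent, then `Var(Σ I_u) ≤ Σ_u m(u)·E[I_u]` where `m(u)` is the class size of `u`. -/
theorem variance_bound_classwise_indep
    {Ω : Type*} [MeasurableSpace Ω] (P : Measure Ω) [IsProbabilityMeasure P]
    {U : Type*} [Fintype U] [DecidableEq U] (c : U → ℕ) (I : U → Ω → ℝ)
    (hmeas : ∀ u, Measurable (I u))
    (hind : ∀ u ω, I u ω = 0 ∨ I u ω = 1)
    (hindep : iIndep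
      (fun i : ℕ => ⨆ u ∈ {u : U | c u = i},
        MeasurableSpace.comap (I u) (inferInstance : MeasurableSpace ℝ)) P) :
    (∫ ω, (∑ u, I u ω) ^ 2 ∂P) - (∫ ω, (∑ u, I u ω) ∂P) ^ 2
      ≤ ∑ u : U, ((Finset.univ.filter fun u' => c u' = c u).card : ℝ) * ∫ ω, I u ω ∂P := by
  -- basic facts
  have hbd : ∀ u ω, 0 ≤ I u ω ∧ I u ω ≤ 1 := by
    intro u ω; rcases hind u ω with h | h <;> simp [h]
  have hInt : ∀ u, Integrable (I u) P := by
    intro u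
    refine (integrable_const (1 : ℝ)).mono' (hmeas u).aestronglyMeasurable ?_
    filter_upwards with ω
    rw [Real.norm_eq_abs, abs_of_nonneg (hbd u ω).1]; exact (hbd u ω).2
  have hIntMul : ∀ u v, Integrable (fun ω => I u ω * I v ω) P := by
    intro u v
    refine (integrable_const (1 : ℝ)).mono'
      ((hmeas u).mul (hmeas v)).aestronglyMeasurable ?_
    filter_upwards with ω
    rw [Real.norm_eq_abs, abs_of_nonneg (mul_nonneg (hbd u ω).1 (hbd v ω).1)]
    exact mul_le_one₀ (hbd u ω).2 (hbd v ω).1 (hbd v ω).2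
  -- independence of I u and I v for c u ≠ c v
  have hIndepFun : ∀ u v, c u ≠ c v → IndepFun (I u) (I v) P := by
    intro u v hne
    have h := hindep.indep hne
    refine indep_of_indep_of_le_right (indep_of_indep_of_le_left h ?_) ?_
    · exact le_iSup₂ (f := fun u' (_ : u' ∈ {u' : U | c u' = c u}) =>
        MeasurableSpace.comap (I u') (inferInstance : MeasurableSpace ℝ)) u rfl
    · exact le_iSup₂ (f := fun u' (_ : u' ∈ {u' : U | c u' = c v}) =>
        MeasurableSpace.comap (I u') (inferInstance : MeasurableSpace ℝ)) v rfl
  -- expand the square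
  have hsq : (∫ ω, (∑ u, I u ω) ^ 2 ∂P)
      = ∑ u, ∑ v, ∫ ω, I u ω * I v ω ∂P := by
    have : ∀ ω, (∑ u, I u ω) ^ 2 = ∑ u, ∑ v, I u ω * I v ω := by
      intro ω; rw [sq, Finset.sum_mul_sum]
    simp_rw [this]
    rw [integral_finset_sum _ fun u _ => integrable_finset_sum _ fun v _ => hIntMul u v]
    exact Finset.sum_congr rfl fun u _ => integral_finset_sum _ fun v _ => hIntMul u v
  have hlin : (∫ ω, (∑ u, I u ω) ∂P) = ∑ u, ∫ ω, I u ω ∂P :=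
    integral_finset_sum _ fun u _ => hInt u
  rw [hsq, hlin, sq, Finset.sum_mul_sum, ← Finset.sum_sub_distrib]
  simp_rw [← Finset.sum_sub_distrib]
  -- termwise bound
  have key : ∀ u : U, (∑ v, ((∫ ω, I u ω * I v ω ∂P) - (∫ ω, I u ω ∂P) * ∫ ω, I v ω ∂P))
      ≤ ((Finset.univ.filter fun u' => c u' = c u).card : ℝ) * ∫ ω, I u ω ∂P := by
    intro u
    have hterm : ∀ v : U, ((∫ ω, I u ω * I v ω ∂P) - (∫ ω, I u ω ∂P) * ∫ ω, I v ω ∂P)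
        ≤ if c v = c u then ∫ ω, I u ω ∂P else 0 := by
      intro v
      by_cases h : c v = c u
      · simp only [h, if_true]
        have h1 : (∫ ω, I u ω * I v ω ∂P) ≤ ∫ ω, I u ω ∂P := by
          refine integral_mono (hIntMul u v) (hInt u) fun ω => ?_
          calc I u ω * I v ω ≤ I u ω * 1 := by
                exact mul_le_mul_of_nonneg_left (hbd v ω).2 (hbd u ω).1
            _ = I u ω := mul_one _
        have h2 : 0 ≤ (∫ ω, I u ω ∂P) * ∫ ω, I v ω ∂P :=
          mul_nonneg (integral_nonneg fun ω => (hbd u ω).1)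
            (integral_nonneg fun ω => (hbd v ω).1)
        linarith
      · simp only [h, if_false]
        have := IndepFun.integral_mul_eq_mul_integral (hIndepFun u v (fun hh => h hh.symm))
          (hInt u).aestronglyMeasurable (hInt v).aestronglyMeasurable
        rw [show (fun ω => I u ω * I v ω) = I u * I v from rfl, this]
        simp
    calc (∑ v, ((∫ ω, I u ω * I v ω ∂P) - (∫ ω, I u ω ∂P) * ∫ ω, I v ω ∂P))
        ≤ ∑ v : U, if c v = c u then ∫ ω, I u ω ∂P else 0 :=
          Finset.sum_le_sum fun v _ => hterm v
      _ = ((Finset.univ.filter fun u' => c u' = c u).card : ℝ) * ∫ ω, I u ω ∂P := by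
          rw [Finset.sum_ite, Finset.sum_const_zero, add_zero, Finset.sum_const, nsmul_eq_mul]
  exact Finset.sum_le_sum fun u _ => key u

end LTCPaper
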